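/- Let n ≥ 6 and let W be a 4-tensor on ℝⁿ with curvature symmetries, satisfying the first Bianchi identity, and totally trace-free. Then 2·|Σ_{i,j,k,l,h,m} W_{ijlk} W_{jhkm} W_{himl}| + (1/2)·|Σ_{i,j,k,l,h,m} W_{ijkl} W_{hmij} W_{klhm}| ≤ [2(n²+n−4)/√((n−1)n(n+1)(n+2)) + (n²−n−4)/(2√((n−2)(n−1)n(n+1)))] · ‖W‖³. -/

import Mathlib

set_option maxHeartbeats 4000000

open Finset

private lemma tangent_cubic (a b x : ℝ) (hx : x ≤ b) :
    x^3 ≤ (2*a+b)*x^2 - (a^2+2*a*b)*x + a^2*b := by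
  nlinarith [mul_nonneg (sq_nonneg (x-a)) (sub_nonneg.2 hx)]

/-- Sharp bound on sum of cubes given zero sum and few nonzero entries. -/
lemma scalar_cube_bound {ι : Type*} [Fintype ι] [DecidableEq ι] (e : ℕ) (he : 3 ≤ e)
    (lam : ι → ℝ) (h0 : ∑ i, lam i = 0)
    (hcard : (Finset.univ.filter (fun i => lam i ≠ 0)).card ≤ e) :
    ∑ i, (lam i) ^ 3 ≤
      ((e : ℝ) - 2) / Real.sqrt ((e : ℝ) * ((e : ℝ) - 1)) * (Real.sqrt (∑ i, (lam i) ^ 2)) ^ 3 := by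
  have he3 : (3 : ℝ) ≤ (e : ℝ) := by exact_mod_cast he
  set s : ℝ := ∑ i, (lam i) ^ 2 with hs
  have hsnn : 0 ≤ s := Finset.sum_nonneg (fun i _ => sq_nonneg _)
  set q : ℝ := Real.sqrt ((e : ℝ) * ((e : ℝ) - 1)) with hqdef
  have hqpos : 0 < q := Real.sqrt_pos.2 (by nlinarith)
  have hq2 : q ^ 2 = (e : ℝ) * ((e : ℝ) - 1) := Real.sq_sqrt (by nlinarith)
  set r : ℝ := Real.sqrt s with hrdef
  have hrnn : 0 ≤ r := Real.sqrt_nonneg _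
  have hr2 : r ^ 2 = s := Real.sq_sqrt hsnn
  set b : ℝ := ((e : ℝ) - 1) * r / q with hbdef
  set a : ℝ := -(r / q) with hadef
  clear_value s q r b a
  have hbnn : 0 ≤ b := by
    rw [hbdef]; exact div_nonneg (mul_nonneg (by linarith) hrnn) hqpos.le
  -- each entry is at most b
  have hle : ∀ i, lam i ≤ b := by
    intro i
    by_cases hzi : lam i = 0
    · rw [hzi]; exact hbnn
    · have hi : i ∈ Finset.univ.filter (fun i => lam i ≠ 0) := by simp [hzi]
      set t := (Finset.univ.filter (fun i => lam i ≠ 0)).erase i with htdef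
      have hsumt : ∑ j ∈ t, lam j = -lam i := by
        have h1 : ∑ j ∈ Finset.univ.filter (fun i => lam i ≠ 0), lam j = 0 := by
          rw [Finset.sum_filter_ne_zero]; exact h0
        have := Finset.add_sum_erase _ lam hi
        rw [h1] at this
        linarith
      have hcs : (∑ j ∈ t, lam j) ^ 2 ≤ (t.card : ℝ) * ∑ j ∈ t, (lam j) ^ 2 :=
        sq_sum_le_card_mul_sum_sq
      have htcard : (t.card : ℝ) ≤ (e : ℝ) - 1 := by
        have h2 : t.card + 1 ≤ e := by
          have h3 : t.card = (Finset.univ.filter (fun i => lam i ≠ 0)).card - 1 :=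
            Finset.card_erase_of_mem hi
          have hc1 : 1 ≤ (Finset.univ.filter (fun i => lam i ≠ 0)).card :=
            Finset.card_pos.2 ⟨i, hi⟩
          omega
        have := (Nat.cast_le (α := ℝ)).2 h2
        push_cast at this; linarith
      have htnn : (0:ℝ) ≤ ∑ j ∈ t, (lam j) ^ 2 := Finset.sum_nonneg (fun j _ => sq_nonneg _)
      have h3 : ∑ j ∈ t, (lam j) ^ 2 ≤ s - (lam i) ^ 2 := by
        have h4 := Finset.add_sum_erase _ (fun j => (lam j) ^ 2) hi
        have h5 : ∑ j ∈ Finset.univ.filter (fun i => lam i ≠ 0), (lam j) ^ 2 ≤ s := by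
          rw [hs]
          exact Finset.sum_le_sum_of_subset_of_nonneg (Finset.filter_subset _ _)
            (fun j _ _ => sq_nonneg _)
        rw [← htdef] at h4
        linarith
      have hkey : (e:ℝ) * (lam i) ^ 2 ≤ ((e:ℝ) - 1) * s := by
        have hA : ((lam i) : ℝ) ^ 2 ≤ ((e:ℝ) - 1) * ∑ j ∈ t, (lam j) ^ 2 := by
          have := mul_le_mul_of_nonneg_right htcard htnn
          rw [hsumt] at hcs
          nlinarith [hcs]
        have hB : ((e:ℝ) - 1) * ∑ j ∈ t, (lam j) ^ 2 ≤ ((e:ℝ)-1) * (s - (lam i)^2) :=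
          mul_le_mul_of_nonneg_left h3 (by linarith)
        nlinarith [hA, hB]
      have hb2 : b ^ 2 * ((e:ℝ) * ((e:ℝ)-1)) = ((e:ℝ)-1)^2 * s := by
        rw [hbdef]; field_simp
        linear_combination ((e:ℝ)-1)^2 * ((e:ℝ) * ((e:ℝ)-1)) * hr2 - ((e:ℝ)-1)^2 * s * hq2
      have hsq : (lam i) ^ 2 ≤ b ^ 2 := by
        have hpos : (0:ℝ) < (e:ℝ) * ((e:ℝ)-1) := by nlinarith
        have h6 : ((e:ℝ) * ((e:ℝ)-1)) * (lam i)^2 ≤ ((e:ℝ) * ((e:ℝ)-1)) * b^2 := by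
          nlinarith [hkey, hb2]
        exact le_of_mul_le_mul_left h6 hpos
      calc lam i ≤ |lam i| := le_abs_self _
        _ = Real.sqrt ((lam i) ^ 2) := (Real.sqrt_sq_eq_abs _).symm
        _ ≤ Real.sqrt (b ^ 2) := Real.sqrt_le_sqrt hsq
        _ = b := Real.sqrt_sq hbnn
  -- pointwise tangent-cubic bound
  have hpt : ∀ i, (lam i) ^ 3 ≤ (2*a+b) * (lam i)^2 - (a^2+2*a*b) * lam i +
      (if lam i = 0 then 0 else a^2*b) := by
    intro i
    by_cases hzi : lam i = 0
    · simp [hzi]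
    · simp only [hzi, if_false]
      exact tangent_cubic a b (lam i) (hle i)
  have habnn : 0 ≤ a^2*b := mul_nonneg (sq_nonneg _) hbnn
  calc ∑ i, (lam i) ^ 3
      ≤ ∑ i, ((2*a+b) * (lam i)^2 - (a^2+2*a*b) * lam i +
          (if lam i = 0 then 0 else a^2*b)) := Finset.sum_le_sum (fun i _ => hpt i)
    _ = (2*a+b) * s - (a^2+2*a*b) * 0 +
          ((Finset.univ.filter (fun i => lam i ≠ 0)).card : ℝ) * (a^2*b) := by
        rw [Finset.sum_add_distrib, Finset.sum_sub_distrib, ← Finset.mul_sum, ← Finset.mul_sum,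
          ← hs, h0]
        congr 1
        rw [Finset.sum_ite, Finset.sum_const, Finset.sum_const]
        simp [Finset.filter_not, mul_comm]
    _ ≤ (2*a+b) * s + (e:ℝ) * (a^2*b) := by
        have hc : ((Finset.univ.filter (fun i => lam i ≠ 0)).card : ℝ) ≤ (e:ℝ) := by
          exact_mod_cast hcard
        nlinarith [mul_le_mul_of_nonneg_right hc habnn]
    _ = ((e : ℝ) - 2) / q * r ^ 3 := by
        rw [hadef, hbdef, ← hr2]
        field_simp
        ring_nf
        linear_combination (-(r^3)) * hq2



open Finset Matrix

section MatrixLemmas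

variable {ι : Type*} [Fintype ι] [DecidableEq ι]

lemma diag_powers (B : Matrix ι ι ℝ) (hB : B.IsHermitian) :
    B.trace = ∑ i, hB.eigenvalues i ∧
    (B * B).trace = ∑ i, (hB.eigenvalues i) ^ 2 ∧
    (B * B * B).trace = ∑ i, (hB.eigenvalues i) ^ 3 := by
  set U : Matrix ι ι ℝ := (hB.eigenvectorUnitary : Matrix ι ι ℝ) with hU
  have hUU : star U * U = 1 := (Matrix.mem_unitaryGroup_iff').mp hB.eigenvectorUnitary.2
  have hcancel : ∀ Z : Matrix ι ι ℝ, star U * (U * Z) = Z := by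
    intro Z; rw [← Matrix.mul_assoc, hUU, Matrix.one_mul]
  set μ : ι → ℝ := hB.eigenvalues with hμ
  set D : Matrix ι ι ℝ := Matrix.diagonal μ with hD
  have hspec : B = U * D * star U := by
    have h := hB.spectral_theorem
    rw [hD, hμ, hU]
    convert h using 3
    rw [Unitary.conjStarAlgAut_apply]; rfl
  have htr : ∀ X : Matrix ι ι ℝ, (U * X * star U).trace = X.trace := by
    intro X
    rw [Matrix.trace_mul_cycle, hUU, Matrix.one_mul]
  have hmul : ∀ X Y : Matrix ι ι ℝ, (U * X * star U) * (U * Y * star U) = U * (X * Y) * star U := by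
    intro X Y
    simp only [Matrix.mul_assoc, hcancel]
  refine ⟨?_, ?_, ?_⟩
  · rw [hspec, htr, hD, Matrix.trace_diagonal]
  · rw [hspec, hmul, htr, hD, Matrix.diagonal_mul_diagonal, Matrix.trace_diagonal]
    exact Finset.sum_congr rfl (fun i _ => by first
      | (simp only [Pi.mul_apply]; ring)
      | ring
      | rfl)
  · rw [hspec, hmul, hmul, htr, hD, Matrix.diagonal_mul_diagonal, Matrix.diagonal_mul_diagonal,
      Matrix.trace_diagonal]
    exact Finset.sum_congr rfl (fun i _ => by first
      | (simp only [Pi.mul_apply]; ring)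
      | ring
      | rfl)

lemma trace_cube_le (B : Matrix ι ι ℝ) (hB : B.IsHermitian) (htr0 : B.trace = 0)
    (e : ℕ) (he : 3 ≤ e) (hrank : B.rank ≤ e) :
    (B * B * B).trace ≤
      ((e : ℝ) - 2) / Real.sqrt ((e : ℝ) * ((e : ℝ) - 1)) *
        (Real.sqrt ((B * B).trace)) ^ 3 := by
  obtain ⟨h1, h2, h3⟩ := diag_powers B hB
  rw [h2, h3]
  apply scalar_cube_bound e he hB.eigenvalues (by rw [← h1, htr0])
  have hc : Fintype.card {i // hB.eigenvalues i ≠ 0} =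
      (Finset.univ.filter (fun i => hB.eigenvalues i ≠ 0)).card := Fintype.card_subtype _
  rw [← hc, ← hB.rank_eq_card_non_zero_eigs]
  exact hrank

lemma abs_trace_cube_le (B : Matrix ι ι ℝ) (hB : B.IsHermitian) (htr0 : B.trace = 0)
    (e : ℕ) (he : 3 ≤ e) (hrank : B.rank ≤ e) :
    |(B * B * B).trace| ≤
      ((e : ℝ) - 2) / Real.sqrt ((e : ℝ) * ((e : ℝ) - 1)) *
        (Real.sqrt ((B * B).trace)) ^ 3 := by
  rw [abs_le]
  constructor
  · have := trace_cube_le (-B) hB.neg (by simp [htr0]) e he (by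
      have hle : (-B).rank ≤ B.rank := by
        rw [show -B = B * (-1) from by simp]
        exact Matrix.rank_mul_le_left _ _
      omega)
    rw [show (-B) * (-B) * (-B) = -(B*B*B) by noncomm_ring] at this
    rw [show (-B) * (-B) = B*B by noncomm_ring] at this
    simp only [Matrix.trace_neg] at this
    linarith
  · exact trace_cube_le B hB htr0 e he hrank

end MatrixLemmas



open Finset Matrix

section RankCard

variable {ι : Type*} [Fintype ι] [DecidableEq ι]

/-- If every row of `C` is a multiple of a row indexed by the subset `P`,
then the rank of `C` is at most the cardinality of `P`. -/
lemma rank_le_card_of_rows (C : Matrix ι ι ℝ) (P : ι → Prop) [DecidablePred P]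
    (hcomb : ∀ p, ∃ (c : ℝ) (p' : ι), P p' ∧ ∀ q, C p q = c * C p' q) :
    C.rank ≤ Fintype.card {x // P x} := by
  choose c p' hP hrow using hcomb
  set E : Matrix ι {x // P x} ℝ := fun p r => if (r : ι) = p' p then c p else 0 with hE
  set G : Matrix {x // P x} ι ℝ := fun r q => C (r : ι) q with hG
  have hCEG : C = E * G := by
    ext p q
    rw [Matrix.mul_apply]
    rw [Finset.sum_eq_single (⟨p' p, hP p⟩ : {x // P x})]
    · simp [hE, hG, hrow p q]
    · intro r _ hr
      have : (r : ι) ≠ p' p := by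
        intro hc; exact hr (Subtype.ext hc)
      simp [hE, this]
    · intro h; exact absurd (Finset.mem_univ _) h
  calc C.rank = (E * G).rank := by rw [hCEG]
    _ ≤ E.rank := Matrix.rank_mul_le_left _ _
    _ ≤ Fintype.card {x // P x} := Matrix.rank_le_card_width _

end RankCard

section Cards

variable (n : ℕ)

lemma card_lt_pairs :
    2 * (Finset.univ.filter (fun p : Fin n × Fin n => p.1 < p.2)).card = n * n - n := by
  have hswap : (Finset.univ.filter (fun p : Fin n × Fin n => p.1 < p.2)).card =
      (Finset.univ.filter (fun p : Fin n × Fin n => p.2 < p.1)).card := by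
    apply Finset.card_bij (fun p _ => Prod.swap p)
    · intro a ha; simp at ha ⊢; exact ha
    · intro a ha b hb hab
      exact Prod.swap_injective hab
    · intro b hb
      exact ⟨Prod.swap b, by simp at hb ⊢; exact hb, by simp⟩
  have hdiag : (Finset.univ.filter (fun p : Fin n × Fin n => p.1 = p.2)).card = n := by
    have : (Finset.univ.filter (fun p : Fin n × Fin n => p.1 = p.2)) =
        Finset.univ.image (fun i : Fin n => (i, i)) := by
      ext p
      simp only [Finset.mem_filter, Finset.mem_univ, true_and, Finset.mem_image]
      constructor
      · intro h; exact ⟨p.1, by simp [Prod.ext_iff, h]⟩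
      · rintro ⟨i, rfl⟩; rfl
    rw [this, Finset.card_image_of_injective _ (fun a b h => (Prod.ext_iff.1 h).1),
      Finset.card_univ, Fintype.card_fin]
  have hsplit : (Finset.univ.filter (fun p : Fin n × Fin n => p.1 < p.2)).card +
      ((Finset.univ.filter (fun p : Fin n × Fin n => p.1 = p.2)).card +
       (Finset.univ.filter (fun p : Fin n × Fin n => p.2 < p.1)).card) = n * n := by
    have h1 := Finset.card_filter_add_card_filter_not
      (s := (Finset.univ : Finset (Fin n × Fin n))) (p := fun p => p.1 < p.2)
    have h2 : (Finset.univ.filter (fun p : Fin n × Fin n => ¬ p.1 < p.2)).card =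
        (Finset.univ.filter (fun p : Fin n × Fin n => p.1 = p.2)).card +
        (Finset.univ.filter (fun p : Fin n × Fin n => p.2 < p.1)).card := by
      rw [← Finset.card_union_of_disjoint]
      · congr 1
        ext p
        simp only [Finset.mem_filter, Finset.mem_univ, true_and, Finset.mem_union, not_lt]
        omega
      · rw [Finset.disjoint_filter]
        intro p _ h1 h2
        omega
    rw [h2] at h1
    rw [h1, Finset.card_univ]
    simp [Fintype.card_fin]
  omega

end Cards

lemma card_le_pairs (n : ℕ) :
    2 * (Finset.univ.filter (fun p : Fin n × Fin n => p.1 ≤ p.2)).card = n * n + n := by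
  have hswap : (Finset.univ.filter (fun p : Fin n × Fin n => p.1 < p.2)).card =
      (Finset.univ.filter (fun p : Fin n × Fin n => p.2 < p.1)).card := by
    apply Finset.card_bij (fun p _ => Prod.swap p)
    · intro a ha; simp at ha ⊢; exact ha
    · intro a ha b hb hab
      exact Prod.swap_injective hab
    · intro b hb
      exact ⟨Prod.swap b, by simp at hb ⊢; exact hb, by simp⟩
  have h1 := Finset.card_filter_add_card_filter_not
    (s := (Finset.univ : Finset (Fin n × Fin n))) (p := fun p => p.1 ≤ p.2)
  have h2 : (Finset.univ.filter (fun p : Fin n × Fin n => ¬ p.1 ≤ p.2)) =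
      (Finset.univ.filter (fun p : Fin n × Fin n => p.2 < p.1)) := by
    ext p
    simp [not_le]
  have h3 := card_lt_pairs n
  have hcu : (Finset.univ : Finset (Fin n × Fin n)).card = n * n := by
    simp [Finset.card_univ]
  have hnn : n ≤ n * n := by nlinarith
  rw [h2, hcu] at h1
  omega

lemma sqrt_cube_subadd (x y : ℝ) (hx : 0 ≤ x) (hy : 0 ≤ y) :
    (Real.sqrt x) ^ 3 + (Real.sqrt y) ^ 3 ≤ (Real.sqrt (x + y)) ^ 3 := by
  have h1 : Real.sqrt x ≤ Real.sqrt (x + y) := Real.sqrt_le_sqrt (by linarith)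
  have h2 : Real.sqrt y ≤ Real.sqrt (x + y) := Real.sqrt_le_sqrt (by linarith)
  have hx2 : (Real.sqrt x) ^ 2 = x := Real.sq_sqrt hx
  have hy2 : (Real.sqrt y) ^ 2 = y := Real.sq_sqrt hy
  have hxy2 : (Real.sqrt (x + y)) ^ 2 = x + y := Real.sq_sqrt (by linarith)
  have e1 : (Real.sqrt x) ^ 3 = x * Real.sqrt x := by
    rw [pow_succ, hx2]
  have e2 : (Real.sqrt y) ^ 3 = y * Real.sqrt y := by
    rw [pow_succ, hy2]
  have e3 : (Real.sqrt (x + y)) ^ 3 = (x + y) * Real.sqrt (x + y) := by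
    rw [pow_succ, hxy2]
  rw [e1, e2, e3]
  have hb1 : x * Real.sqrt x ≤ x * Real.sqrt (x + y) :=
    mul_le_mul_of_nonneg_left h1 hx
  have hb2 : y * Real.sqrt y ≤ y * Real.sqrt (x + y) :=
    mul_le_mul_of_nonneg_left h2 hy
  nlinarith [hb1, hb2]



open Finset Matrix

/-- Case 3 (`n ≥ 6`) in the proof of Lemma 2.4 of the paper, for a totally
trace-free Weyl-type tensor `W`. -/
theorem stmt_10 (n : ℕ) (hn : 6 ≤ n)
    (W : Fin n → Fin n → Fin n → Fin n → ℝ)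
    (hanti1 : ∀ i j k l, W i j k l = -W j i k l)
    (hanti2 : ∀ i j k l, W i j k l = -W i j l k)
    (hpair : ∀ i j k l, W i j k l = W k l i j)
    (hbianchi : ∀ i j k l, W i j k l + W i k l j + W i l j k = 0)
    (htrfree : ∀ j l, ∑ i, W i j i l = 0) :
    2 * |∑ i, ∑ j, ∑ k, ∑ l, ∑ h, ∑ m, W i j l k * W j h k m * W h i m l| +
      (1 / 2) * |∑ i, ∑ j, ∑ k, ∑ l, ∑ h, ∑ m, W i j k l * W h m i j * W k l h m| ≤
      (2 * ((n : ℝ) ^ 2 + n - 4) /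
          Real.sqrt (((n : ℝ) - 1) * n * ((n : ℝ) + 1) * ((n : ℝ) + 2)) +
        ((n : ℝ) ^ 2 - n - 4) /
          (2 * Real.sqrt (((n : ℝ) - 2) * ((n : ℝ) - 1) * n * ((n : ℝ) + 1)))) *
        (Real.sqrt (∑ i, ∑ j, ∑ k, ∑ l, (W i j k l) ^ 2)) ^ 3 := by
  classical
  have hzero1 : ∀ a k l, W a a k l = 0 := fun a k l => by have := hanti1 a a k l; linarith
  -- the two operators on pairs
  set M : Matrix (Fin n × Fin n) (Fin n × Fin n) ℝ := fun p q => W p.1 q.1 p.2 q.2 with hMdef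
  set T : Matrix (Fin n × Fin n) (Fin n × Fin n) ℝ := fun p q => W p.1 p.2 q.1 q.2 with hTdef
  set Mp : Matrix (Fin n × Fin n) (Fin n × Fin n) ℝ :=
    fun p q => (M p q + M p.swap q) / 2 with hMpdef
  set Mm : Matrix (Fin n × Fin n) (Fin n × Fin n) ℝ :=
    fun p q => (M p q - M p.swap q) / 2 with hMmdef
  -- basic entry identities
  have hMsymm : ∀ p q, M q p = M p q := by
    intro p q
    have h1 := hanti1 q.1 p.1 q.2 p.2
    have h2 := hanti2 p.1 q.1 q.2 p.2
    have h3 := hpair q.1 p.1 q.2 p.2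
    simp only [hMdef]
    linarith [hpair p.1 q.1 p.2 q.2, hanti1 p.1 q.1 q.2 p.2]
  have hMswap : ∀ p q, M p.swap q = M p q.swap := by
    intro p q
    exact hpair p.2 q.1 p.1 q.2
  have hTsymm : ∀ p q, T q p = T p q := fun p q => hpair q.1 q.2 p.1 p.2
  have hMp_left : ∀ p q, Mp p.swap q = Mp p q := by
    intro p q
    simp only [hMpdef, Prod.swap_swap]
    ring
  have hMm_left : ∀ p q, Mm p.swap q = -Mm p q := by
    intro p q
    simp only [hMmdef, Prod.swap_swap]
    ring
  have hMp_right : ∀ p q, Mp p q.swap = Mp p q := by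
    intro p q
    simp only [hMpdef]
    rw [← hMswap p q, ← hMswap p.swap q, Prod.swap_swap]
    ring
  have hMm_right : ∀ p q, Mm p q.swap = -Mm p q := by
    intro p q
    simp only [hMmdef]
    rw [← hMswap p q, ← hMswap p.swap q, Prod.swap_swap]
    ring
  have hMpsymm : ∀ p q, Mp q p = Mp p q := by
    intro p q
    simp only [hMpdef]
    linarith [hMsymm p q, hMsymm p q.swap, hMswap p q]
  have hMmsymm : ∀ p q, Mm q p = Mm p q := by
    intro p q
    simp only [hMmdef]
    linarith [hMsymm p q, hMsymm p q.swap, hMswap p q]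
  have hMpH : Mp.IsHermitian := Matrix.ext fun p q => by
    rw [Matrix.conjTranspose_apply, star_trivial]; exact hMpsymm p q
  have hMmH : Mm.IsHermitian := Matrix.ext fun p q => by
    rw [Matrix.conjTranspose_apply, star_trivial]; exact hMmsymm p q
  have hTH : T.IsHermitian := Matrix.ext fun p q => by
    rw [Matrix.conjTranspose_apply, star_trivial]; exact hTsymm p q
  -- the splitting M = Mp + Mm with orthogonal pieces
  have hMadd : M = Mp + Mm := by
    ext p q
    simp only [Matrix.add_apply]; simp only [hMpdef, hMmdef]
    ring
  have hswap_equiv : ∀ (f : Fin n × Fin n → ℝ), ∑ r : Fin n × Fin n, f r.swap = ∑ r, f r := by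
    intro f
    exact Fintype.sum_equiv (Equiv.prodComm (Fin n) (Fin n)) _ _ (fun r => rfl)
  have hPM : Mp * Mm = 0 := by
    ext p q
    rw [Matrix.mul_apply, Matrix.zero_apply]
    have h1 : ∑ r, Mp p r * Mm r q = ∑ r : Fin n × Fin n, Mp p r.swap * Mm r.swap q :=
      (hswap_equiv (fun r => Mp p r * Mm r q)).symm
    have h2 : ∑ r : Fin n × Fin n, Mp p r.swap * Mm r.swap q = -∑ r, Mp p r * Mm r q := by
      rw [← Finset.sum_neg_distrib]
      exact Finset.sum_congr rfl fun (r : Fin n × Fin n) _ => by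
        rw [hMp_right, hMm_left]; ring
    linarith [h1, h2]
  have hMP : Mm * Mp = 0 := by
    ext p q
    rw [Matrix.mul_apply, Matrix.zero_apply]
    have h1 : ∑ r, Mm p r * Mp r q = ∑ r : Fin n × Fin n, Mm p r.swap * Mp r.swap q :=
      (hswap_equiv (fun r => Mm p r * Mp r q)).symm
    have h2 : ∑ r : Fin n × Fin n, Mm p r.swap * Mp r.swap q = -∑ r, Mm p r * Mp r q := by
      rw [← Finset.sum_neg_distrib]
      exact Finset.sum_congr rfl fun (r : Fin n × Fin n) _ => by
        rw [hMm_right, hMp_left]; ring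
    linarith [h1, h2]
  have hsq_split : M * M = Mp * Mp + Mm * Mm := by
    rw [hMadd, add_mul, mul_add, mul_add, hPM, hMP]
    simp
  have hcube_split : M * M * M = Mp * Mp * Mp + Mm * Mm * Mm := by
    rw [hMadd]
    have h2 : (Mp + Mm) * (Mp + Mm) = Mp * Mp + Mm * Mm := by
      rw [add_mul, mul_add, mul_add, hPM, hMP]; simp
    rw [h2, add_mul, mul_add, mul_add]
    have e1 : Mp * Mp * Mm = 0 := by rw [Matrix.mul_assoc, hPM, Matrix.mul_zero]
    have e2 : Mm * Mm * Mp = 0 := by rw [Matrix.mul_assoc, hMP, Matrix.mul_zero]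
    rw [e1, e2]
    abel
  -- generic trace expansions
  have htrace_sq : ∀ (A : Matrix (Fin n × Fin n) (Fin n × Fin n) ℝ),
      (A * A).trace = ∑ p : Fin n × Fin n, ∑ q : Fin n × Fin n, A p q * A q p := by
    intro A
    rw [Matrix.trace]
    simp only [Matrix.diag_apply, Matrix.mul_apply]
  have htrace_cube : ∀ (A : Matrix (Fin n × Fin n) (Fin n × Fin n) ℝ),
      (A * A * A).trace =
        ∑ p : Fin n × Fin n, ∑ r : Fin n × Fin n, ∑ q : Fin n × Fin n,
          A p r * A r q * A q p := by
    intro A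
    rw [Matrix.trace]
    simp only [Matrix.diag_apply, Matrix.mul_apply, Finset.sum_mul]
    refine Finset.sum_congr rfl fun p _ => ?_
    rw [Finset.sum_comm]
  -- zero traces
  have htrM0 : ∑ p : Fin n × Fin n, M p p = 0 :=
    Finset.sum_eq_zero fun p _ => hzero1 _ _ _
  have htrswap : ∑ p : Fin n × Fin n, M p.swap p = 0 := by
    simp only [hMdef, Fintype.sum_prod_type]
    have hterm : ∀ a b : Fin n, W b a a b = -(W a b a b) := fun a b => hanti1 b a a b
    calc ∑ a : Fin n, ∑ b : Fin n, W b a a b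
        = ∑ a : Fin n, ∑ b : Fin n, -(W a b a b) :=
          Finset.sum_congr rfl fun a _ => Finset.sum_congr rfl fun b _ => hterm a b
      _ = -∑ a : Fin n, ∑ b : Fin n, W a b a b := by
          simp [Finset.sum_neg_distrib]
      _ = -∑ b : Fin n, ∑ a : Fin n, W a b a b := by rw [Finset.sum_comm]
      _ = 0 := by
          simp only [htrfree]
          simp
  have htrMp : Mp.trace = 0 := by
    rw [Matrix.trace]
    simp only [Matrix.diag_apply]; simp only [hMpdef]
    rw [show ∑ x : Fin n × Fin n, (M x x + M x.swap x) / 2 =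
        ((∑ x : Fin n × Fin n, M x x) + ∑ x : Fin n × Fin n, M x.swap x) / 2 by
      rw [← Finset.sum_add_distrib, Finset.sum_div]]
    rw [htrM0, htrswap]
    norm_num
  have htrMm : Mm.trace = 0 := by
    rw [Matrix.trace]
    simp only [Matrix.diag_apply]; simp only [hMmdef]
    rw [show ∑ x : Fin n × Fin n, (M x x - M x.swap x) / 2 =
        ((∑ x : Fin n × Fin n, M x x) - ∑ x : Fin n × Fin n, M x.swap x) / 2 by
      rw [← Finset.sum_sub_distrib, Finset.sum_div]]
    rw [htrM0, htrswap]
    norm_num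
  have htrT : T.trace = 0 := by
    rw [Matrix.trace]
    simp only [Matrix.diag_apply]; simp only [hTdef, Fintype.sum_prod_type]
    rw [Finset.sum_comm]
    simp only [htrfree]
    simp
  -- norm identities
  have hnormM : (M * M).trace = ∑ i, ∑ j, ∑ k, ∑ l, (W i j k l) ^ 2 := by
    rw [htrace_sq M]
    simp only [hMdef, Fintype.sum_prod_type]
    calc ∑ a : Fin n, ∑ b : Fin n, ∑ c : Fin n, ∑ d : Fin n, W a c b d * W c a d b
        = ∑ a : Fin n, ∑ b : Fin n, ∑ c : Fin n, ∑ d : Fin n, (W a c b d) ^ 2 := by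
          refine Finset.sum_congr rfl fun a _ => Finset.sum_congr rfl fun b _ =>
            Finset.sum_congr rfl fun c _ => Finset.sum_congr rfl fun d _ => ?_
          have h1 := hanti1 c a d b
          have h2 := hanti2 a c d b
          have : W c a d b = W a c b d := by linarith
          rw [this]; ring
      _ = ∑ i, ∑ j, ∑ k, ∑ l, (W i j k l) ^ 2 := by
          refine Finset.sum_congr rfl fun a _ => ?_
          rw [Finset.sum_comm]
  have hnormT : (T * T).trace = ∑ i, ∑ j, ∑ k, ∑ l, (W i j k l) ^ 2 := by
    rw [htrace_sq T]
    simp only [hTdef, Fintype.sum_prod_type]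
    refine Finset.sum_congr rfl fun i _ => Finset.sum_congr rfl fun j _ =>
      Finset.sum_congr rfl fun k _ => Finset.sum_congr rfl fun l _ => ?_
    rw [← hpair i j k l]; ring
  -- the six-fold sums as traces
  have hS1 : (M * M * M).trace =
      ∑ i, ∑ j, ∑ k, ∑ l, ∑ h, ∑ m, W i j l k * W j h k m * W h i m l := by
    rw [htrace_cube M]
    simp only [hMdef, Fintype.sum_prod_type]
    refine Finset.sum_congr rfl fun i _ => ?_
    conv_lhs => rw [Finset.sum_comm]
    refine Finset.sum_congr rfl fun j _ => ?_
    conv_lhs => rw [Finset.sum_comm]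
  have hS2 : (T * T * T).trace =
      ∑ i, ∑ j, ∑ k, ∑ l, ∑ h, ∑ m, W i j k l * W h m i j * W k l h m := by
    rw [htrace_cube T]
    simp only [hTdef, Fintype.sum_prod_type]
    refine Finset.sum_congr rfl fun i _ => Finset.sum_congr rfl fun j _ =>
      Finset.sum_congr rfl fun k _ => Finset.sum_congr rfl fun l _ =>
      Finset.sum_congr rfl fun h _ => Finset.sum_congr rfl fun m _ => by ring
  -- nonnegativity of the block square traces
  have hxnn : 0 ≤ (Mp * Mp).trace := by
    rw [htrace_sq Mp]
    exact Finset.sum_nonneg fun p _ => Finset.sum_nonneg fun q _ => by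
      rw [hMpsymm p q]; exact mul_self_nonneg _
  have hynn : 0 ≤ (Mm * Mm).trace := by
    rw [htrace_sq Mm]
    exact Finset.sum_nonneg fun p _ => Finset.sum_nonneg fun q _ => by
      rw [hMmsymm p q]; exact mul_self_nonneg _
  have hsplit_tr : (Mp * Mp).trace + (Mm * Mm).trace =
      ∑ i, ∑ j, ∑ k, ∑ l, (W i j k l) ^ 2 := by
    rw [← Matrix.trace_add, ← hsq_split, hnormM]
  -- ranks
  set e1 : ℕ := Fintype.card {x : Fin n × Fin n // x.1 ≤ x.2} with he1def
  set e2 : ℕ := Fintype.card {x : Fin n × Fin n // x.1 < x.2} with he2def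
  have hrankMp : Mp.rank ≤ e1 := by
    rw [he1def]
    apply rank_le_card_of_rows Mp (fun x => x.1 ≤ x.2)
    intro p
    by_cases h : p.1 ≤ p.2
    · exact ⟨1, p, h, fun q => by rw [one_mul]⟩
    · exact ⟨1, p.swap, (not_le.1 h).le, fun q => by rw [one_mul, hMp_left]⟩
  have hwit : ((⟨0, by omega⟩ : Fin n), (⟨1, by omega⟩ : Fin n)).1 <
      ((⟨0, by omega⟩ : Fin n), (⟨1, by omega⟩ : Fin n)).2 := by
    simp [Fin.mk_lt_mk]
  have hrankMm : Mm.rank ≤ e2 := by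
    rw [he2def]
    apply rank_le_card_of_rows Mm (fun x => x.1 < x.2)
    intro p
    rcases lt_trichotomy p.1 p.2 with h | h | h
    · exact ⟨1, p, h, fun q => by rw [one_mul]⟩
    · refine ⟨0, _, hwit, fun q => ?_⟩
      have hps : p.swap = p := by
        rw [Prod.ext_iff]; exact ⟨h.symm, h⟩
      simp only [hMmdef, hps]
      ring
    · refine ⟨-1, p.swap, h, fun q => ?_⟩
      rw [hMm_left]; ring
  have hrankT : T.rank ≤ e2 := by
    rw [he2def]
    apply rank_le_card_of_rows T (fun x => x.1 < x.2)
    intro p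
    rcases lt_trichotomy p.1 p.2 with h | h | h
    · exact ⟨1, p, h, fun q => by rw [one_mul]⟩
    · refine ⟨0, _, hwit, fun q => ?_⟩
      simp only [hTdef]
      rw [h, hzero1, zero_mul]
    · refine ⟨-1, p.swap, h, fun q => ?_⟩
      simp only [hTdef]
      have := hanti1 p.1 p.2 q.1 q.2
      simp only [Prod.fst_swap, Prod.snd_swap]
      linarith
  -- cardinal arithmetic
  have hnn' : n ≤ n * n := by nlinarith
  have h36 : 36 ≤ n * n := Nat.mul_le_mul hn hn
  have h6n : 6 * n ≤ n * n := Nat.mul_le_mul_right n hn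
  have hc2 : 2 * e2 = n * n - n := by
    rw [he2def, Fintype.card_subtype]
    exact card_lt_pairs n
  have hc1 : 2 * e1 = n * n + n := by
    rw [he1def, Fintype.card_subtype]
    exact card_le_pairs n
  have he1_3 : 3 ≤ e1 := by omega
  have he2_3 : 3 ≤ e2 := by omega
  have he2le1 : e2 ≤ e1 := by omega
  have hnR : (6:ℝ) ≤ (n:ℝ) := by exact_mod_cast hn
  have he1R : (e1 : ℝ) = ((n:ℝ)^2 + n) / 2 := by
    have h1 : ((2 * e1 : ℕ) : ℝ) = ((n * n + n : ℕ) : ℝ) := by rw [hc1]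
    push_cast at h1
    nlinarith [h1]
  have he2R : (e2 : ℝ) = ((n:ℝ)^2 - n) / 2 := by
    have h1 : ((2 * e2 : ℕ) : ℝ) = ((n * n - n : ℕ) : ℝ) := by rw [hc2]
    rw [Nat.cast_sub hnn'] at h1
    push_cast at h1
    nlinarith [h1]
  -- the main estimates
  have hbMp := abs_trace_cube_le Mp hMpH htrMp e1 he1_3 hrankMp
  have hbMm := abs_trace_cube_le Mm hMmH htrMm e1 he1_3 (hrankMm.trans he2le1)
  have hbT := abs_trace_cube_le T hTH htrT e2 he2_3 hrankT
  set c1e : ℝ := ((e1 : ℝ) - 2) / Real.sqrt ((e1 : ℝ) * ((e1 : ℝ) - 1)) with hc1edef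
  set c2e : ℝ := ((e2 : ℝ) - 2) / Real.sqrt ((e2 : ℝ) * ((e2 : ℝ) - 1)) with hc2edef
  have hc1nn : 0 ≤ c1e := by
    rw [hc1edef]
    apply div_nonneg _ (Real.sqrt_nonneg _)
    have : (3:ℝ) ≤ (e1:ℝ) := by exact_mod_cast he1_3
    linarith
  set S : ℝ := ∑ i, ∑ j, ∑ k, ∑ l, (W i j k l) ^ 2 with hSdef
  have habs1 : |∑ i, ∑ j, ∑ k, ∑ l, ∑ h, ∑ m, W i j l k * W j h k m * W h i m l| ≤
      c1e * (Real.sqrt S) ^ 3 := by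
    rw [← hS1, hcube_split, Matrix.trace_add]
    calc |(Mp*Mp*Mp).trace + (Mm*Mm*Mm).trace|
        ≤ |(Mp*Mp*Mp).trace| + |(Mm*Mm*Mm).trace| := abs_add_le _ _
      _ ≤ c1e * (Real.sqrt ((Mp*Mp).trace)) ^ 3 + c1e * (Real.sqrt ((Mm*Mm).trace)) ^ 3 :=
          add_le_add hbMp hbMm
      _ = c1e * ((Real.sqrt ((Mp*Mp).trace)) ^ 3 + (Real.sqrt ((Mm*Mm).trace)) ^ 3) := by ring
      _ ≤ c1e * (Real.sqrt ((Mp*Mp).trace + (Mm*Mm).trace)) ^ 3 :=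
          mul_le_mul_of_nonneg_left (sqrt_cube_subadd _ _ hxnn hynn) hc1nn
      _ = c1e * (Real.sqrt S) ^ 3 := by rw [hsplit_tr, hSdef]
  have habs2 : |∑ i, ∑ j, ∑ k, ∑ l, ∑ h, ∑ m, W i j k l * W h m i j * W k l h m| ≤
      c2e * (Real.sqrt S) ^ 3 := by
    rw [← hS2]
    have := hbT
    rw [hnormT] at this
    exact this
  -- identification of the constants
  set Y : ℝ := ((n : ℝ) - 1) * n * ((n : ℝ) + 1) * ((n : ℝ) + 2) with hYdef
  set Z : ℝ := ((n : ℝ) - 2) * ((n : ℝ) - 1) * n * ((n : ℝ) + 1) with hZdef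
  have hYval : Y = 4 * ((e1:ℝ) * ((e1:ℝ) - 1)) := by rw [hYdef, he1R]; ring
  have hZval : Z = 4 * ((e2:ℝ) * ((e2:ℝ) - 1)) := by rw [hZdef, he2R]; ring
  have hsqrt4 : ∀ u : ℝ, 0 ≤ u → Real.sqrt (4 * u) = 2 * Real.sqrt u := by
    intro u hu
    rw [show (4:ℝ) * u = 2^2 * u by ring, Real.sqrt_mul (by positivity) u,
      Real.sqrt_sq (by norm_num : (0:ℝ) ≤ 2)]
  have he1prod_pos : 0 < (e1:ℝ) * ((e1:ℝ) - 1) := by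
    have : (3:ℝ) ≤ (e1:ℝ) := by exact_mod_cast he1_3
    nlinarith
  have he2prod_pos : 0 < (e2:ℝ) * ((e2:ℝ) - 1) := by
    have : (3:ℝ) ≤ (e2:ℝ) := by exact_mod_cast he2_3
    nlinarith
  have hsqY : Real.sqrt Y = 2 * Real.sqrt ((e1:ℝ) * ((e1:ℝ) - 1)) := by
    rw [hYval]; exact hsqrt4 _ he1prod_pos.le
  have hsqZ : Real.sqrt Z = 2 * Real.sqrt ((e2:ℝ) * ((e2:ℝ) - 1)) := by
    rw [hZval]; exact hsqrt4 _ he2prod_pos.le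
  have hu1pos : 0 < Real.sqrt ((e1:ℝ) * ((e1:ℝ) - 1)) := Real.sqrt_pos.2 he1prod_pos
  have hu2pos : 0 < Real.sqrt ((e2:ℝ) * ((e2:ℝ) - 1)) := Real.sqrt_pos.2 he2prod_pos
  have hcoef1 : 2 * ((n : ℝ) ^ 2 + n - 4) / Real.sqrt Y = 2 * c1e := by
    rw [hsqY, hc1edef, he1R]
    field_simp
    ring
  have hcoef2 : ((n : ℝ) ^ 2 - n - 4) / (2 * Real.sqrt Z) = (1/2) * c2e := by
    rw [hsqZ, hc2edef, he2R]
    field_simp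
    ring
  -- final assembly
  rw [hcoef1, hcoef2]
  have hcube_nn : 0 ≤ (Real.sqrt S) ^ 3 := pow_nonneg (Real.sqrt_nonneg _) 3
  calc 2 * |∑ i, ∑ j, ∑ k, ∑ l, ∑ h, ∑ m, W i j l k * W j h k m * W h i m l| +
        1 / 2 * |∑ i, ∑ j, ∑ k, ∑ l, ∑ h, ∑ m, W i j k l * W h m i j * W k l h m|
      ≤ 2 * (c1e * (Real.sqrt S) ^ 3) + 1 / 2 * (c2e * (Real.sqrt S) ^ 3) := by
        linarith [habs1, habs2]
    _ = (2 * c1e + 1/2 * c2e) * (Real.sqrt S) ^ 3 := by ring
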